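/- Let (A,B,C,D) be a minimal realization of F. Suppose Π'_f Π_f is a square invertible matrix, where Π_f and Π'_f arise from maximal right and left zero solutions satisfying Π'_f Π_k = 0, Π'_k Π_f = 0, together with the block structure Λ_fzk = [[Λ_k, Λ_kf],[0, Λ_f]] and Λ'_fzk = [[Λ'_k, 0],[Λ'_kf, Λ'_f]]. If Π'_fzk Π_fzk·Λ_fzk = Λ'_fzk·Π'_fzk Π_fzk with Π'_fzk Π_k = 0 and Π'_k Π_fzk = 0, then (Π'_f Π_f)·Λ_f = Λ'_f·(Π'_f Π_f), so the right finite zero matrix Λ_f and the left finite zero matrix Λ'_f are similar. -/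

import Mathlib

open Matrix

noncomputable section

/-- Map a complex matrix entrywise to rational functions. -/
def mc {a b : ℕ} (M : Matrix (Fin a) (Fin b) ℂ) : Matrix (Fin a) (Fin b) (RatFunc ℂ) :=
  M.map (⇑(RatFunc.C : ℂ →+* RatFunc ℂ))

/-- The resolvent `(z I − M)⁻¹` as a matrix of rational functions. -/
def res {a : ℕ} (M : Matrix (Fin a) (Fin a) ℂ) : Matrix (Fin a) (Fin a) (RatFunc ℂ) :=
  ((Matrix.scalar (Fin a) (RatFunc.X : RatFunc ℂ)) - mc M)⁻¹

/-- The "anti-resolvent" `(z I + M)⁻¹`, used for para-hermitian conjugates. -/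
def resneg {a : ℕ} (M : Matrix (Fin a) (Fin a) ℂ) : Matrix (Fin a) (Fin a) (RatFunc ℂ) :=
  ((Matrix.scalar (Fin a) (RatFunc.X : RatFunc ℂ)) + mc M)⁻¹

/-- Observability of a pair `(C, A)`. -/
def Observable {p n : ℕ} (C : Matrix (Fin p) (Fin n) ℂ) (A : Matrix (Fin n) (Fin n) ℂ) : Prop :=
  ∀ v : Fin n → ℂ, (∀ k : ℕ, C *ᵥ ((A ^ k) *ᵥ v) = 0) → v = 0

/-- Controllability of a pair `(Λ, G)`. -/
def Controllable {r m : ℕ} (L : Matrix (Fin r) (Fin r) ℂ) (G : Matrix (Fin r) (Fin m) ℂ) : Prop :=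
  ∀ y : Fin r → ℂ, (∀ k : ℕ, y ᵥ* ((L ^ k) * G) = 0) → y = 0

/-- The range (column space) of a matrix, as a submodule of `ℂⁿ`. -/
def mrange {a b : ℕ} (M : Matrix (Fin a) (Fin b) ℂ) : Submodule ℂ (Fin a → ℂ) :=
  LinearMap.range M.mulVecLin

/-- The set of states reachable from the origin by a finite input sequence
producing identically zero output along the way (the minimal input-containing
subspace `C*(Σ)`). -/
def OutNullReach {n p q : ℕ} (A : Matrix (Fin n) (Fin n) ℂ) (B : Matrix (Fin n) (Fin q) ℂ)
    (C : Matrix (Fin p) (Fin n) ℂ) (D : Matrix (Fin p) (Fin q) ℂ) (x : Fin n → ℂ) : Prop :=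
  ∃ (j : ℕ) (ξ : ℕ → (Fin n → ℂ)) (u : ℕ → (Fin q → ℂ)),
    ξ 0 = 0 ∧ (∀ i < j, ξ (i + 1) = A *ᵥ ξ i + B *ᵥ u i ∧ C *ᵥ ξ i + D *ᵥ u i = 0) ∧ ξ j = x

/-- the right and left finite zero matrices are similar,
via the invertible matrix `Π'_f Π_f`. -/
theorem stmt16 {n p q a a' s : ℕ}
    (A : Matrix (Fin n) (Fin n) ℂ) (B : Matrix (Fin n) (Fin q) ℂ)
    (C : Matrix (Fin p) (Fin n) ℂ) (D : Matrix (Fin p) (Fin q) ℂ)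
    (hobs : Observable C A) (hctrb : Controllable A B)
    (Pk : Matrix (Fin n) (Fin a) ℂ) (Pf : Matrix (Fin n) (Fin s) ℂ)
    (Pk' : Matrix (Fin a') (Fin n) ℂ) (Pf' : Matrix (Fin s) (Fin n) ℂ)
    (Λk : Matrix (Fin a) (Fin a) ℂ) (Λkf : Matrix (Fin a) (Fin s) ℂ)
    (Λf : Matrix (Fin s) (Fin s) ℂ)
    (Λk' : Matrix (Fin a') (Fin a') ℂ) (Λkf' : Matrix (Fin s) (Fin a') ℂ)
    (Λf' : Matrix (Fin s) (Fin s) ℂ)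
    (hfk : Pf' * Pk = 0) (hkf : Pk' * Pf = 0) (hkk : Pk' * Pk = 0)
    (hEq : (fromRows Pk' Pf' * fromCols Pk Pf) * fromBlocks Λk Λkf 0 Λf
        = fromBlocks Λk' 0 Λkf' Λf' * (fromRows Pk' Pf' * fromCols Pk Pf))
    (hinv : IsUnit (Pf' * Pf)) :
    (Pf' * Pf) * Λf = Λf' * (Pf' * Pf) ∧
      (Pf' * Pf) * Λf * (Pf' * Pf)⁻¹ = Λf' := by
  rw [fromRows_mul_fromCols, hfk, hkf, hkk, fromBlocks_multiply, fromBlocks_multiply] at hEq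
  have h22 := congrArg Matrix.toBlocks₂₂ hEq
  simp [Matrix.toBlocks_fromBlocks₂₂] at h22
  refine ⟨h22, ?_⟩
  rw [h22, Matrix.mul_assoc, Matrix.mul_nonsing_inv _ ((Matrix.isUnit_iff_isUnit_det _).mp hinv),
    Matrix.mul_one]
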